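/- Let a, κ, C > 0 be constants, let y, z, d ∈ ℝ, W ≥ 0, p ≥ 0, Θ₂ ≥ 0, b > 0, and let P₁, P₂, P₃ be real numbers satisfying P₁ ≥ (1/(4aκ⁶))(κ + 4aC + 4κ³ + 4aκp + 8aκ²), P₂ ≥ (1/(4a³κ⁵))((1/(16κ))(κ + 4aC + 4κ³ + 4aκp)² + κ² + a²p² + 4a²(κ³ + 1)), and P₃ ≥ (1/(64a⁷κ⁴))((κ² + a²p²)² + 16a⁴). Set u := −(κ + e^z)⁷(P₁ + P₂y² + P₃y⁶)y. Then b·y·u + Θ₂|y|(W + p|y|) + y·d ≤ −Cy² + (a/(κ + e^z))·(d² + W²/2 + ((Θ₂ − κ − e^z)⁺)² + ((Θ₂ − κ − e^z)⁺)⁴ + 2b·((1/b − κ − e^z)⁺)²), where (r)⁺ := max(r, 0). -/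

import Mathlib

set_option maxHeartbeats 1000000


/-- The pointwise inequality combining (5.5)–(5.7) of the paper: the DADS feedback law
`u = −(κ + e^z)⁷(P₁ + P₂y² + P₃y⁶)y` with gains satisfying (3.8)–(3.10) dominates the
uncertain terms in the derivative of `V(y) = y²/2` along `ẏ = bu + L'θ₂ + d`.
Here `W` stands for `‖w‖`, `p` for `φ(y)` and `Θ₂` for `|θ₂|`. -/
theorem dads_feedback_domination (a κ C y z d W p Θ₂ b P₁ P₂ P₃ u : ℝ)
    (ha : 0 < a) (hκ : 0 < κ) (hC : 0 < C)
    (hW : 0 ≤ W) (hp : 0 ≤ p) (hΘ₂ : 0 ≤ Θ₂) (hb : 0 < b)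
    (hP₁ : (1 / (4 * a * κ ^ 6)) * (κ + 4 * a * C + 4 * κ ^ 3 + 4 * a * κ * p + 8 * a * κ ^ 2)
        ≤ P₁)
    (hP₂ : (1 / (4 * a ^ 3 * κ ^ 5)) *
        ((1 / (16 * κ)) * (κ + 4 * a * C + 4 * κ ^ 3 + 4 * a * κ * p) ^ 2 +
          κ ^ 2 + a ^ 2 * p ^ 2 + 4 * a ^ 2 * (κ ^ 3 + 1)) ≤ P₂)
    (hP₃ : (1 / (64 * a ^ 7 * κ ^ 4)) * ((κ ^ 2 + a ^ 2 * p ^ 2) ^ 2 + 16 * a ^ 4) ≤ P₃)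
    (hu : u = -(κ + Real.exp z) ^ 7 * (P₁ + P₂ * y ^ 2 + P₃ * y ^ 6) * y) :
    b * y * u + Θ₂ * |y| * (W + p * |y|) + y * d ≤
      -C * y ^ 2 + (a / (κ + Real.exp z)) *
        (d ^ 2 + W ^ 2 / 2 + (max (Θ₂ - κ - Real.exp z) 0) ^ 2 +
          (max (Θ₂ - κ - Real.exp z) 0) ^ 4 +
          2 * b * (max (1 / b - κ - Real.exp z) 0) ^ 2) := by
  have hexp : (0:ℝ) < Real.exp z := Real.exp_pos z
  set E : ℝ := κ + Real.exp z with hEdef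
  set M : ℝ := max (Θ₂ - κ - Real.exp z) 0 with hMdef
  set N : ℝ := max (1 / b - κ - Real.exp z) 0 with hNdef
  set v : ℝ := |y| with hvdef
  have hE : 0 < E := by rw [hEdef]; positivity
  have hκE : κ ≤ E := by rw [hEdef]; linarith
  have hv0 : 0 ≤ v := by rw [hvdef]; exact abs_nonneg y
  have hv2 : v ^ 2 = y ^ 2 := by rw [hvdef]; exact sq_abs y
  have hM0 : 0 ≤ M := by rw [hMdef]; exact le_max_right _ _
  have hN0 : 0 ≤ N := by rw [hNdef]; exact le_max_right _ _
  have hΘME : Θ₂ ≤ M + E := by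
    have h := le_max_left (Θ₂ - κ - Real.exp z) 0
    rw [← hMdef] at h
    rw [hEdef]; linarith
  have hbNE : 1 ≤ b * (N + E) := by
    have h := le_max_left (1 / b - κ - Real.exp z) 0
    rw [← hNdef] at h
    have h2 : 1 / b ≤ N + E := by rw [hEdef]; linarith
    have h3 := mul_le_mul_of_nonneg_left h2 hb.le
    rw [mul_one_div, div_self hb.ne'] at h3
    linarith
  clear_value E M N v
  -- scaled versions of the gain hypotheses
  have hP1s : κ + 4 * a * C + 4 * κ ^ 3 + 4 * a * κ * p + 8 * a * κ ^ 2 ≤ 4 * a * κ ^ 6 * P₁ := by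
    have h := mul_le_mul_of_nonneg_left hP₁ (by positivity : (0:ℝ) ≤ 4 * a * κ ^ 6)
    rw [← mul_assoc, mul_one_div_cancel (by positivity : (4 * a * κ ^ 6 : ℝ) ≠ 0), one_mul] at h
    exact h
  have hP2s : (1 / (16 * κ)) * (κ + 4 * a * C + 4 * κ ^ 3 + 4 * a * κ * p) ^ 2 +
      κ ^ 2 + a ^ 2 * p ^ 2 + 4 * a ^ 2 * (κ ^ 3 + 1) ≤ 4 * a ^ 3 * κ ^ 5 * P₂ := by
    have h := mul_le_mul_of_nonneg_left hP₂ (by positivity : (0:ℝ) ≤ 4 * a ^ 3 * κ ^ 5)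
    rw [← mul_assoc, mul_one_div_cancel (by positivity : (4 * a ^ 3 * κ ^ 5 : ℝ) ≠ 0), one_mul] at h
    exact h
  have hQ2 : (κ + 4 * a * C + 4 * κ ^ 3 + 4 * a * κ * p) ^ 2 + 16 * κ ^ 3 + 16 * κ * a ^ 2 * p ^ 2
      ≤ 64 * a ^ 3 * κ ^ 6 * P₂ := by
    have h4 : (1 / (16 * κ)) * (κ + 4 * a * C + 4 * κ ^ 3 + 4 * a * κ * p) ^ 2 ≤
        4 * a ^ 3 * κ ^ 5 * P₂ - κ ^ 2 - a ^ 2 * p ^ 2 - 4 * a ^ 2 * (κ ^ 3 + 1) := by linarith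
    have h5 := mul_le_mul_of_nonneg_left h4 (by positivity : (0:ℝ) ≤ 16 * κ)
    rw [← mul_assoc, mul_one_div_cancel (by positivity : (16 * κ : ℝ) ≠ 0), one_mul] at h5
    linarith [h5, (by positivity : (0:ℝ) ≤ 64 * a ^ 2 * κ ^ 4), (by positivity : (0:ℝ) ≤ 64 * a ^ 2 * κ)]
  have hP3s : (κ ^ 2 + a ^ 2 * p ^ 2) ^ 2 + 16 * a ^ 4 ≤ 64 * a ^ 7 * κ ^ 4 * P₃ := by
    have h := mul_le_mul_of_nonneg_left hP₃ (by positivity : (0:ℝ) ≤ 64 * a ^ 7 * κ ^ 4)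
    rw [← mul_assoc, mul_one_div_cancel (by positivity : (64 * a ^ 7 * κ ^ 4 : ℝ) ≠ 0), one_mul] at h
    exact h
  -- powers of κ ≤ E
  have e2 : κ ^ 2 ≤ E ^ 2 := pow_le_pow_left₀ hκ.le hκE 2
  have e3 : κ ^ 3 ≤ E ^ 3 := pow_le_pow_left₀ hκ.le hκE 3
  have e5 : κ ^ 5 ≤ E ^ 5 := pow_le_pow_left₀ hκ.le hκE 5
  have e6 : κ ^ 6 ≤ E ^ 6 := pow_le_pow_left₀ hκ.le hκE 6
  -- the key polynomial dominance facts
  have F1 : κ ^ 6 * (4 * a * C + E + 4 * E ^ 3 + 4 * a * E * p) ≤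
      E ^ 6 * (κ + 4 * a * C + 4 * κ ^ 3 + 4 * a * κ * p + 8 * a * κ ^ 2) := by
    linarith [mul_le_mul_of_nonneg_left e6 (by positivity : (0:ℝ) ≤ 4 * a * C),
      mul_le_mul_of_nonneg_left e5 (mul_nonneg hκ.le hE.le),
      mul_le_mul_of_nonneg_left e3 (mul_nonneg (by positivity : (0:ℝ) ≤ 4 * κ ^ 3) (pow_pos hE 3).le),
      mul_le_mul_of_nonneg_left e5 (mul_nonneg (mul_nonneg (by positivity : (0:ℝ) ≤ 4 * a * p) hκ.le) hE.le),
      mul_nonneg (by positivity : (0:ℝ) ≤ 8 * a * κ ^ 2) (pow_pos hE 6).le]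
  have G1 : 4 * a * C + E + 4 * E ^ 3 + 4 * a * E * p ≤ 4 * a * E ^ 6 * P₁ := by
    have h := mul_le_mul_of_nonneg_left hP1s (pow_pos hE 6).le
    have h2 : κ ^ 6 * (4 * a * C + E + 4 * E ^ 3 + 4 * a * E * p) ≤
        κ ^ 6 * (4 * a * E ^ 6 * P₁) := by linarith [F1, h]
    exact le_of_mul_le_mul_left h2 (pow_pos hκ 6)
  have hAtnn : 0 ≤ 4 * a * C + E + 4 * E ^ 3 + 4 * a * E * p := by
    linarith [pow_pos hE 3, mul_pos ha hC, hE,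
      mul_nonneg (mul_nonneg (by positivity : (0:ℝ) ≤ 4 * a) hE.le) hp]
  have F2 : κ ^ 3 * (4 * a * C + E + 4 * E ^ 3 + 4 * a * E * p) ≤
      E ^ 3 * (κ + 4 * a * C + 4 * κ ^ 3 + 4 * a * κ * p) := by
    linarith [mul_le_mul_of_nonneg_left e3 (by positivity : (0:ℝ) ≤ 4 * a * C),
      mul_le_mul_of_nonneg_left e2 (mul_nonneg hκ.le hE.le),
      mul_le_mul_of_nonneg_left e2 (mul_nonneg (mul_nonneg (by positivity : (0:ℝ) ≤ 4 * a * p) hκ.le) hE.le)]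
  have F2sq := mul_self_le_mul_self (mul_nonneg (pow_pos hκ 3).le hAtnn) F2
  have F3 : κ ^ 6 * (16 * (E ^ 3 + a ^ 2 * E * p ^ 2)) ≤
      E ^ 6 * (16 * κ ^ 3 + 16 * κ * a ^ 2 * p ^ 2) := by
    linarith [mul_le_mul_of_nonneg_left e3 (mul_nonneg (by positivity : (0:ℝ) ≤ 16 * κ ^ 3) (pow_pos hE 3).le),
      mul_le_mul_of_nonneg_left e5 (mul_nonneg (by positivity : (0:ℝ) ≤ 16 * κ * a ^ 2 * p ^ 2) hE.le)]
  have G2 : 16 * (E ^ 3 + a ^ 2 * E * p ^ 2) + (4 * a * C + E + 4 * E ^ 3 + 4 * a * E * p) ^ 2 ≤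
      64 * a ^ 3 * E ^ 6 * P₂ := by
    have h := mul_le_mul_of_nonneg_left hQ2 (pow_pos hE 6).le
    have h2 : κ ^ 6 * (16 * (E ^ 3 + a ^ 2 * E * p ^ 2) +
        (4 * a * C + E + 4 * E ^ 3 + 4 * a * E * p) ^ 2) ≤ κ ^ 6 * (64 * a ^ 3 * E ^ 6 * P₂) := by
      linarith [F2sq, F3, h]
    exact le_of_mul_le_mul_left h2 (pow_pos hκ 6)
  have hBtnn : 0 ≤ E ^ 3 + a ^ 2 * E * p ^ 2 := by
    linarith [pow_pos hE 3, mul_nonneg (mul_nonneg (sq_nonneg a) hE.le) (sq_nonneg p)]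
  have F4 : κ ^ 2 * (E ^ 3 + a ^ 2 * E * p ^ 2) ≤ E ^ 3 * (κ ^ 2 + a ^ 2 * p ^ 2) := by
    linarith [mul_le_mul_of_nonneg_left e2
      (mul_nonneg (mul_nonneg (sq_nonneg a) (sq_nonneg p)) hE.le)]
  have F4sq := mul_self_le_mul_self (mul_nonneg (sq_nonneg κ) hBtnn) F4
  have G3 : (E ^ 3 + a ^ 2 * E * p ^ 2) ^ 2 ≤ 64 * a ^ 7 * E ^ 6 * P₃ := by
    have h := mul_le_mul_of_nonneg_left hP3s (pow_pos hE 6).le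
    have h2 : κ ^ 4 * (E ^ 3 + a ^ 2 * E * p ^ 2) ^ 2 ≤ κ ^ 4 * (64 * a ^ 7 * E ^ 6 * P₃) := by
      linarith [F4sq, h, mul_nonneg (by positivity : (0:ℝ) ≤ 16 * a ^ 4) (pow_pos hE 6).le]
    exact le_of_mul_le_mul_left h2 (pow_pos hκ 4)
  set At : ℝ := 4 * a * C + E + 4 * E ^ 3 + 4 * a * E * p with hAtdef
  set Bt : ℝ := E ^ 3 + a ^ 2 * E * p ^ 2 with hBtdef
  clear_value At Bt
  -- key1 : Young inequalities trading N against higher powers of y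
  have key1 : 16 * a ^ 4 * (N + E) * (a ^ 2 * E * At * y ^ 2 + E * Bt * y ^ 4) ≤
      64 * a ^ 7 * E ^ 8 * (P₁ * y ^ 2 + P₂ * y ^ 4 + P₃ * y ^ 8) + 128 * a ^ 8 * N ^ 2 := by
    linarith [mul_le_mul_of_nonneg_left G1 (by positivity : (0:ℝ) ≤ 16 * a ^ 6 * E ^ 2 * y ^ 2),
      mul_le_mul_of_nonneg_left G2 (by positivity : (0:ℝ) ≤ a ^ 4 * E ^ 2 * y ^ 4),
      mul_le_mul_of_nonneg_left G3 (by positivity : (0:ℝ) ≤ E ^ 2 * y ^ 8),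
      mul_nonneg (by positivity : (0:ℝ) ≤ a ^ 4) (sq_nonneg (8 * a ^ 2 * N - E * At * y ^ 2)),
      sq_nonneg (8 * a ^ 4 * N - E * Bt * y ^ 4)]
  have hS : 0 ≤ a ^ 2 * E * At * y ^ 2 + E * Bt * y ^ 4 := by
    linarith [mul_nonneg (mul_nonneg (mul_nonneg (sq_nonneg a) hE.le) hAtnn) (sq_nonneg y),
      mul_nonneg (mul_nonneg hE.le hBtnn) (sq_nonneg (y ^ 2))]
  have key2 : 16 * a ^ 6 * E * At * y ^ 2 + 16 * a ^ 4 * E * Bt * y ^ 4 ≤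
      64 * a ^ 7 * b * E ^ 8 * (P₁ * y ^ 2 + P₂ * y ^ 4 + P₃ * y ^ 8) + 128 * a ^ 8 * b * N ^ 2 := by
    have hm := mul_le_mul_of_nonneg_left key1 hb.le
    linarith [hm, mul_nonneg (mul_nonneg (by positivity : (0:ℝ) ≤ 16 * a ^ 4)
      (sub_nonneg.2 hbNE)) hS]
  -- Young inequalities for the disturbance and unmeasured-state terms
  have hvW : 0 ≤ v * W + p * y ^ 2 := add_nonneg (mul_nonneg hv0 hW) (mul_nonneg hp (sq_nonneg y))
  have fθ : Θ₂ * (v * (W + p * v)) ≤ (M + E) * (v * W + p * y ^ 2) := by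
    have h1 : v * (W + p * v) = v * W + p * y ^ 2 := by rw [← hv2]; ring
    rw [h1]
    exact mul_le_mul_of_nonneg_right hΘME hvW
  have fθs := mul_le_mul_of_nonneg_left fθ
    (mul_nonneg (by positivity : (0:ℝ) ≤ 64 * a ^ 7) hE.le)
  have f2 : 64 * a ^ 7 * E * (y * d) ≤ 16 * a ^ 6 * E ^ 2 * y ^ 2 + 64 * a ^ 8 * d ^ 2 := by
    linarith [mul_nonneg (by positivity : (0:ℝ) ≤ 16 * a ^ 6) (sq_nonneg (E * y - 2 * a * d))]
  have f3 : 64 * a ^ 7 * E ^ 2 * (v * W) ≤ 64 * a ^ 6 * E ^ 4 * y ^ 2 + 16 * a ^ 8 * W ^ 2 := by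
    have heq : 64 * a ^ 6 * E ^ 4 * v ^ 2 = 64 * a ^ 6 * E ^ 4 * y ^ 2 := by rw [hv2]
    linarith [mul_nonneg (by positivity : (0:ℝ) ≤ 16 * a ^ 6) (sq_nonneg (a * W - 2 * E ^ 2 * v)), heq]
  have f4 : 64 * a ^ 7 * E * (M * (v * W)) ≤ 16 * a ^ 8 * W ^ 2 + 64 * a ^ 6 * E ^ 2 * M ^ 2 * y ^ 2 := by
    have heq : 64 * a ^ 6 * E ^ 2 * M ^ 2 * v ^ 2 = 64 * a ^ 6 * E ^ 2 * M ^ 2 * y ^ 2 := by rw [hv2]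
    linarith [mul_nonneg (by positivity : (0:ℝ) ≤ 16 * a ^ 6) (sq_nonneg (a * W - 2 * E * M * v)), heq]
  have f5 : 64 * a ^ 6 * E ^ 2 * M ^ 2 * y ^ 2 ≤ 64 * a ^ 8 * M ^ 4 + 16 * a ^ 4 * E ^ 4 * y ^ 4 := by
    linarith [mul_nonneg (by positivity : (0:ℝ) ≤ 16 * a ^ 4)
      (sq_nonneg (2 * a ^ 2 * M ^ 2 - E ^ 2 * y ^ 2))]
  have f6 : 64 * a ^ 7 * E * (M * (p * y ^ 2)) ≤ 64 * a ^ 8 * M ^ 2 + 16 * a ^ 6 * E ^ 2 * p ^ 2 * y ^ 4 := by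
    linarith [mul_nonneg (by positivity : (0:ℝ) ≤ 16 * a ^ 6) (sq_nonneg (2 * a * M - E * p * y ^ 2))]
  rw [hAtdef, hBtdef] at key2
  have hbig : 64 * a ^ 7 * E * (b * y * u + Θ₂ * v * (W + p * v) + y * d) ≤
      64 * a ^ 7 * E * (-C * y ^ 2 + a / E *
        (d ^ 2 + W ^ 2 / 2 + M ^ 2 + M ^ 4 + 2 * b * N ^ 2)) := by
    have hexpand : 64 * a ^ 7 * E * (-C * y ^ 2 + a / E *
        (d ^ 2 + W ^ 2 / 2 + M ^ 2 + M ^ 4 + 2 * b * N ^ 2)) =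
        -(64 * a ^ 7 * E * C * y ^ 2) + 64 * a ^ 8 *
        (d ^ 2 + W ^ 2 / 2 + M ^ 2 + M ^ 4 + 2 * b * N ^ 2) := by
      field_simp
    rw [hexpand, hu]
    linarith [key2, fθs, f2, f3, f4, f5, f6]
  have hfin := le_of_mul_le_mul_left hbig
    (mul_pos (by positivity : (0:ℝ) < 64 * a ^ 7) hE)
  linarith [hfin]
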